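/- Let Q and P be orthogonal projections on a Hilbert space such that Q - P is trace class, and let N₊, N₋ be the orthogonal projections onto ker(Q - P - I) and ker(Q - P + I) respectively (both finite rank). Then Q̃ := Q - N₊ + N₋ is an orthogonal projection. -/

import Mathlib

open scoped ComplexInnerProductSpace

/-- The absolute value `|A| = sqrt(A*A)` of a bounded operator on a Hilbert space. -/
noncomputable def absCLM {H : Type*} [NormedAddCommGroup H] [InnerProductSpace ℂ H]
    [CompleteSpace H] (A : H →L[ℂ] H) : H →L[ℂ] H :=
  CFC.sqrt (star A * A)

lemma proj_inner_aux {H : Type*} [NormedAddCommGroup H] [InnerProductSpace ℂ H]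
    [CompleteSpace H] (P : H →L[ℂ] H) (hPsa : IsSelfAdjoint P)
    (hPid : IsIdempotentElem P) (y : H) :
    ⟪y, P y⟫ = (‖P y‖ : ℂ) ^ 2 := by
  have h1 : P y = P (P y) := by
    conv_lhs => rw [← hPid.eq]
    rfl
  calc ⟪y, P y⟫ = ⟪y, P (P y)⟫ := by rw [← h1]
    _ = ⟪ContinuousLinearMap.adjoint P y, P y⟫ := by
        rw [ContinuousLinearMap.adjoint_inner_left]
    _ = ⟪P y, P y⟫ := by rw [hPsa.adjoint_eq]
    _ = (‖P y‖ : ℂ) ^ 2 := inner_self_eq_norm_sq_to_K _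

lemma eigen_one_aux {H : Type*} [NormedAddCommGroup H] [InnerProductSpace ℂ H]
    [CompleteSpace H] (Q P : H →L[ℂ] H)
    (hQsa : IsSelfAdjoint Q) (hQid : IsIdempotentElem Q)
    (hPsa : IsSelfAdjoint P) (hPid : IsIdempotentElem P)
    (y : H) (hy : Q y - P y = y) : P y = 0 ∧ Q y = y := by
  have hQy : Q y = y + P y := eq_add_of_sub_eq hy
  have h3q : RCLike.re ⟪y, Q y⟫ = ‖Q y‖ ^ 2 := by
    rw [proj_inner_aux Q hQsa hQid y, ← Complex.ofReal_pow]
    exact Complex.ofReal_re _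
  have hsplit : ⟪y, Q y⟫ = ⟪y, y⟫ + ⟪y, P y⟫ := by
    rw [hQy, inner_add_right]
  have h1' : ‖Q y‖ ^ 2 = ‖y‖ ^ 2 + ‖P y‖ ^ 2 := by
    have := congrArg RCLike.re hsplit
    rw [map_add, h3q, inner_self_eq_norm_sq, proj_inner_aux P hPsa hPid y] at this
    simpa [← Complex.ofReal_pow] using this
  have h2 : ‖Q y‖ ^ 2 = ‖y‖ ^ 2 + 2 * RCLike.re ⟪y, P y⟫ + ‖P y‖ ^ 2 := by
    rw [hQy]
    exact norm_add_sq y (P y)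
  have h3 : RCLike.re ⟪y, P y⟫ = ‖P y‖ ^ 2 := by
    rw [proj_inner_aux P hPsa hPid y, ← Complex.ofReal_pow]
    exact Complex.ofReal_re _
  have h4 : ‖P y‖ ^ 2 = 0 := by nlinarith [h1', h2, h3]
  have h5 : P y = 0 := by
    rwa [pow_eq_zero_iff (by norm_num), norm_eq_zero] at h4
  exact ⟨h5, by rw [hQy, h5, add_zero]⟩

/-- Let `Q`, `P` be orthogonal projections with `Q - P` trace class (encoded: the diagonal
of `|Q - P|` in a Hilbert basis is summable), and let `N₊`, `N₋` be the orthogonal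
projections onto `ker(Q - P - I)` and `ker(Q - P + I)`. Then `Q̃ = Q - N₊ + N₋` is an
orthogonal projection. -/
theorem modified_projection_is_projection
    {ι H : Type*} [NormedAddCommGroup H] [InnerProductSpace ℂ H] [CompleteSpace H]
    (b : HilbertBasis ι ℂ H)
    (Q P Np Nm : H →L[ℂ] H)
    (hQsa : IsSelfAdjoint Q) (hQid : IsIdempotentElem Q)
    (hPsa : IsSelfAdjoint P) (hPid : IsIdempotentElem P)
    (htc : Summable fun i => (⟪b i, absCLM (Q - P) (b i)⟫).re)
    (hNpsa : IsSelfAdjoint Np) (hNpid : IsIdempotentElem Np)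
    (hNmsa : IsSelfAdjoint Nm) (hNmid : IsIdempotentElem Nm)
    (hNprange : LinearMap.range (Np : H →ₗ[ℂ] H) = LinearMap.ker ((Q - P - 1 : H →L[ℂ] H) : H →ₗ[ℂ] H))
    (hNmrange : LinearMap.range (Nm : H →ₗ[ℂ] H) = LinearMap.ker ((Q - P + 1 : H →L[ℂ] H) : H →ₗ[ℂ] H)) :
    IsSelfAdjoint (Q - Np + Nm) ∧ IsIdempotentElem (Q - Np + Nm) := by
  -- Q fixes range Np, kills range Nm
  have hQNp : Q * Np = Np := by
    ext x
    have hx : Np x ∈ LinearMap.ker ((Q - P - 1 : H →L[ℂ] H) : H →ₗ[ℂ] H) := by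
      rw [← hNprange]; exact ⟨x, rfl⟩
    rw [LinearMap.mem_ker] at hx
    have hx' : Q (Np x) - P (Np x) = Np x := by
      have := hx
      simp only [ContinuousLinearMap.coe_coe, ContinuousLinearMap.coe_sub', Pi.sub_apply] at this ⊢
      rw [sub_eq_zero] at this
      exact this
    exact (eigen_one_aux Q P hQsa hQid hPsa hPid (Np x) hx').2
  have hQNm : Q * Nm = 0 := by
    ext x
    have hx : Nm x ∈ LinearMap.ker ((Q - P + 1 : H →L[ℂ] H) : H →ₗ[ℂ] H) := by
      rw [← hNmrange]; exact ⟨x, rfl⟩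
    rw [LinearMap.mem_ker] at hx
    have hx' : P (Nm x) - Q (Nm x) = Nm x := by
      simp only [ContinuousLinearMap.coe_coe, ContinuousLinearMap.coe_add', Pi.add_apply,
        ContinuousLinearMap.coe_sub', Pi.sub_apply] at hx
      have : Q (Nm x) - P (Nm x) + Nm x = 0 := hx
      linear_combination (norm := abel) -this
    exact (eigen_one_aux P Q hPsa hPid hQsa hQid (Nm x) hx').1
  have hNpQ : Np * Q = Np := by
    have := congrArg star hQNp
    rwa [star_mul, hQsa.star_eq, hNpsa.star_eq] at this
  have hNmQ : Nm * Q = 0 := by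
    have := congrArg star hQNm
    rwa [star_mul, hQsa.star_eq, hNmsa.star_eq, star_zero] at this
  have hNpNm : Np * Nm = 0 := by
    calc Np * Nm = (Np * Q) * Nm := by rw [hNpQ]
      _ = Np * (Q * Nm) := by rw [mul_assoc]
      _ = 0 := by rw [hQNm, mul_zero]
  have hNmNp : Nm * Np = 0 := by
    have := congrArg star hNpNm
    rwa [star_mul, hNpsa.star_eq, hNmsa.star_eq, star_zero] at this
  refine ⟨(hQsa.sub hNpsa).add hNmsa, ?_⟩
  unfold IsIdempotentElem
  have expand : (Q - Np + Nm) * (Q - Np + Nm) =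
      Q * Q - Q * Np + Q * Nm - (Np * Q - Np * Np + Np * Nm)
        + (Nm * Q - Nm * Np + Nm * Nm) := by noncomm_ring
  rw [expand, hQid.eq, hQNp, hQNm, hNpQ, hNpid.eq, hNpNm, hNmQ, hNmNp, hNmid.eq]
  abel
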